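/- Let μ be a partition with staircase rank k. Then the map i ↦ i + μ_i is injective on the set of non-salient rows of μ, and its image on this set is exactly the set of integers {t : t ≥ k + 1}; that is, N_μ = [k+1, ∞). -/
import Mathlib


/-- `μ : ℕ → ℕ` represents a partition via its parts `μ 1 ≥ μ 2 ≥ ⋯`; the index `0` is
unused and required to be `0`.  The parts are weakly decreasing and only finitely many
are nonzero. -/
def IsPartition (μ : ℕ → ℕ) : Prop :=
  μ 0 = 0 ∧ (∀ i, 1 ≤ i → μ (i + 1) ≤ μ i) ∧ {i | μ i ≠ 0}.Finite

/-- The weight `|μ|` of a partition: the sum of its parts. -/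
noncomputable def pweight (μ : ℕ → ℕ) : ℕ := ∑ᶠ i, μ i

/-- The length `ℓ(μ)`: the number of nonzero parts. -/
noncomputable def plength (μ : ℕ → ℕ) : ℕ := Set.ncard {i | 1 ≤ i ∧ μ i ≠ 0}

/-- A partition is strict if its nonzero parts are pairwise distinct. -/
def IsStrict (μ : ℕ → ℕ) : Prop := ∀ i j, 1 ≤ i → i < j → μ j ≠ 0 → μ j < μ i

/-- `(i, j)` is a cell of the Ferrers board of `μ`. -/
def Cell (μ : ℕ → ℕ) (i j : ℕ) : Prop := 1 ≤ i ∧ 1 ≤ j ∧ j ≤ μ i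

/-- The Ferrers board of `μ` as a set of cells. -/
def Board (μ : ℕ → ℕ) : Set (ℕ × ℕ) := {p | Cell μ p.1 p.2}

/-- The number of ways to place `k` non-attacking rooks on the Ferrers board of `μ`,
i.e. the number of `k`-element subsets of the board whose cells have pairwise distinct
row indices and pairwise distinct column indices. -/
noncomputable def rookCount (μ : ℕ → ℕ) (k : ℕ) : ℕ :=
  Set.ncard {s : Finset (ℕ × ℕ) | s.card = k ∧ (∀ p ∈ s, Cell μ p.1 p.2) ∧
    ∀ p ∈ s, ∀ q ∈ s, p ≠ q → p.1 ≠ q.1 ∧ p.2 ≠ q.2}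

/-- Rook equivalence of partitions. -/
def RookEquiv (μ ν : ℕ → ℕ) : Prop := ∀ k, rookCount μ k = rookCount ν k

/-- `α` contains `μ` as a pattern: there are strictly increasing functions `f, g` on the
positive integers such that `(i, j)` is a cell of `μ` iff `(f i, g j)` is a cell of `α`. -/
def Contains (α μ : ℕ → ℕ) : Prop :=
  ∃ f g : ℕ → ℕ,
    (∀ i, 1 ≤ i → 1 ≤ f i) ∧ (∀ j, 1 ≤ j → 1 ≤ g j) ∧
    (∀ i j, 1 ≤ i → i < j → f i < f j) ∧
    (∀ i j, 1 ≤ i → i < j → g i < g j) ∧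
    (∀ i j, 1 ≤ i → 1 ≤ j → (Cell μ i j ↔ Cell α (f i) (g j)))

/-- `P_n(μ)`: the set of partitions of `n` containing `μ`. -/
def PnSet (n : ℕ) (μ : ℕ → ℕ) : Set (ℕ → ℕ) :=
  {α | IsPartition α ∧ pweight α = n ∧ Contains α μ}

/-- `P_n(μ, k)`: the members of `P_n(μ)` whose first part is `k + μ 1`. -/
def PnSetK (n : ℕ) (μ : ℕ → ℕ) (k : ℕ) : Set (ℕ → ℕ) :=
  {α | α ∈ PnSet n μ ∧ α 1 = k + μ 1}

/-- Wilf equivalence of partitions. -/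
def WilfEquiv (μ ν : ℕ → ℕ) : Prop :=
  ∀ n, 1 ≤ n → (PnSet n μ).ncard = (PnSet n ν).ncard

/-- The multiplicity of `v` among the parts `μ 1, μ 2, …` of `μ`. -/
noncomputable def partCount (μ : ℕ → ℕ) (v : ℕ) : ℕ := Set.ncard {i | 1 ≤ i ∧ μ i = v}

/-- `γ` is the extension of `ν` by the pair `(α, β)`: `γ` is a partition whose multiset of
nonzero parts is the multiset union of the nonzero parts of `ν + α` and those of `β`. -/
def IsExtension (ν α β γ : ℕ → ℕ) : Prop :=
  IsPartition γ ∧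
  ∀ v, 1 ≤ v → partCount γ v = partCount (fun i => ν i + α i) v + partCount β v

/-- `ν` is the `(i, j)`-transform of `μ`: the board of `ν` is obtained from the board of
`μ` by replacing the subboard of cells weakly southeast of `(i, j)` by its conjugate. -/
def IsTransform (i j : ℕ) (μ ν : ℕ → ℕ) : Prop :=
  IsPartition μ ∧ IsPartition ν ∧ 1 ≤ i ∧ 1 ≤ j ∧
  Board ν = (Board μ \ {p ∈ Board μ | i ≤ p.1 ∧ j ≤ p.2}) ∪
    (fun p : ℕ × ℕ => (i + (p.2 - j), j + (p.1 - i))) '' {p ∈ Board μ | i ≤ p.1 ∧ j ≤ p.2}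

/-- One step: `ν` is an `(i, 1)`-transform of `μ` for some `i`. -/
def TransformRel1 (μ ν : ℕ → ℕ) : Prop := ∃ i, IsTransform i 1 μ ν

/-- `(i, 1)`-equivalence: a finite (possibly empty) sequence of `(i, 1)`-transformations. -/
def TransformEquiv1 : (ℕ → ℕ) → (ℕ → ℕ) → Prop := Relation.ReflTransGen TransformRel1

/-- One step: `ν` is an `(i, j)`-transform of `μ` for some `i, j`. -/
def TransformRel (μ ν : ℕ → ℕ) : Prop := ∃ i j, IsTransform i j μ ν

/-- Differing by a finite sequence of `(i, j)`-transformations. -/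
def TransformEquiv : (ℕ → ℕ) → (ℕ → ℕ) → Prop := Relation.ReflTransGen TransformRel

/-- Row `i` of `μ` is salient if `i + μ i ≥ j + μ j` for some `j > i`. -/
def Salient (μ : ℕ → ℕ) (i : ℕ) : Prop := ∃ j, i < j ∧ j + μ j ≤ i + μ i

/-- The multiplicity of `v` in the multiset `S_μ = {i + μ i : row i of μ is salient}`. -/
noncomputable def salientCount (μ : ℕ → ℕ) (v : ℕ) : ℕ :=
  Set.ncard {i | 1 ≤ i ∧ Salient μ i ∧ i + μ i = v}

/-- The staircase rank of `μ`: the largest `k` with `μ i ≥ k - i + 1` for `1 ≤ i ≤ k`. -/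
noncomputable def staircaseRank (μ : ℕ → ℕ) : ℕ :=
  sSup {k | ∀ i, 1 ≤ i → i ≤ k → k + 1 ≤ μ i + i}

/-- The number of cells of the L in `μ` with corner `p = (i, j)`: the cells `(i, x)` of `μ`
with `x ≥ j` together with the cells `(y, j)` with `1 ≤ y ≤ i`. -/
def LWeight (μ : ℕ → ℕ) (p : ℕ × ℕ) : ℕ := (μ p.1 - p.2) + p.1

/-- `c` lists the corners of a nested sequence of `k` L's in `μ`: each corner is a cell of
`μ`, and later corners are strictly above and strictly to the right of earlier ones. -/
def IsNested (μ : ℕ → ℕ) {k : ℕ} (c : Fin k → ℕ × ℕ) : Prop :=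
  (∀ a, Cell μ (c a).1 (c a).2) ∧
  ∀ a b : Fin k, a < b → (c b).1 < (c a).1 ∧ (c a).2 < (c b).2

/-- `w_k(μ)`: the maximum weight of a sequence of `k` nested L's in `μ`
(`0` if there is no such sequence). -/
noncomputable def nestedLMax (μ : ℕ → ℕ) (k : ℕ) : ℕ :=
  sSup {w | ∃ c : Fin k → ℕ × ℕ, IsNested μ c ∧ ∑ a, LWeight μ (c a) = w}

theorem nonsalient_values (μ : ℕ → ℕ) (hμ : IsPartition μ)
    (k : ℕ) (hk : staircaseRank μ = k) :
    Set.InjOn (fun i => i + μ i) {i | 1 ≤ i ∧ ¬ Salient μ i} ∧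
      (fun i => i + μ i) '' {i | 1 ≤ i ∧ ¬ Salient μ i} = {t | k + 1 ≤ t} := by
  obtain ⟨h0, hmono, hfin⟩ := hμ
  obtain ⟨M, hM⟩ := hfin.bddAbove
  have hzero : ∀ i, M + 1 ≤ i → μ i = 0 := by
    intro i hi
    by_contra h
    have := hM h
    omega
  have hstep : ∀ i, 1 ≤ i → (i + 1) + μ (i + 1) ≤ i + μ i + 1 := by
    intro i hi
    have := hmono i hi
    omega
  set K := {k | ∀ i, 1 ≤ i → i ≤ k → k + 1 ≤ μ i + i} with hKdef
  have hsup : sSup K = k := hk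
  have hKbdd : BddAbove K := by
    refine ⟨M + 1, fun x hx => ?_⟩
    by_contra hxx
    push_neg at hxx
    have h1 : μ x = 0 := hzero x (by omega)
    have := hx x (by omega) le_rfl
    omega
  have hK0 : (0 : ℕ) ∈ K := fun i hi1 hi0 => by omega
  have hkmem : k ∈ K := hsup ▸ Nat.sSup_mem ⟨0, hK0⟩ hKbdd
  have hknot : k + 1 ∉ K := by
    intro h
    have := le_csSup hKbdd h
    omega
  have hmin : ∀ i, 1 ≤ i → k + 1 ≤ i + μ i := by
    intro i hi
    rcases le_or_gt i k with h | h
    · have := hkmem i hi h; omega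
    · omega
  have hi0 : ∃ i0, 1 ≤ i0 ∧ i0 + μ i0 = k + 1 := by
    rw [hKdef, Set.mem_setOf_eq] at hknot
    push_neg at hknot
    obtain ⟨i0, hi1, _, hlt⟩ := hknot
    exact ⟨i0, hi1, by have := hmin i0 hi1; omega⟩
  obtain ⟨i0, hi01, hi0eq⟩ := hi0
  constructor
  · intro a ha b hb hab
    simp only at hab
    by_contra hne
    rcases Nat.lt_or_ge a b with h | h
    · exact ha.2 ⟨b, h, le_of_eq hab.symm⟩
    · exact hb.2 ⟨a, lt_of_le_of_ne h (Ne.symm hne), le_of_eq hab⟩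
  · ext t
    simp only [Set.mem_image, Set.mem_setOf_eq]
    constructor
    · rintro ⟨i, ⟨hi1, _⟩, rfl⟩
      exact hmin i hi1
    · intro ht
      set B := {i | 1 ≤ i ∧ i + μ i ≤ t} with hBdef
      have hBne : i0 ∈ B := ⟨hi01, by omega⟩
      have hBbd : BddAbove B := ⟨t, fun x hx => by have := hx.2; omega⟩
      have hmem := Nat.sSup_mem ⟨i0, hBne⟩ hBbd
      set m := sSup B with hm
      obtain ⟨hm1, hmle⟩ := hmem
      have hnotmem : ∀ j, m < j → ¬ j ∈ B := by
        intro j hj hjB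
        have := le_csSup hBbd hjB
        omega
      have hnot1 : ¬ (m + 1) ∈ B := hnotmem (m + 1) (by omega)
      have hgt : t < (m + 1) + μ (m + 1) := by
        by_contra h
        exact hnot1 ⟨by omega, by omega⟩
      have heq : m + μ m = t := by
        have := hstep m hm1
        omega
      refine ⟨m, ⟨hm1, ?_⟩, heq⟩
      rintro ⟨j, hj, hjle⟩
      have : ¬ j ∈ B := hnotmem j hj
      rw [hBdef, Set.mem_setOf_eq] at this
      push_neg at this
      have := this (by omega)
      omega
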